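/- For n ≥ 1, the number of permutations π of {1,...,n} such that either π_1 = n, or there exists a value v with π_1 < v < n that appears at a position after the position of n, equals (n-1)!·(n - H_{n-1}), where H_{n-1} = ∑_{k=1}^{n-1} 1/k is the (n-1)-st harmonic number. -/

import Mathlib

open Finset Equiv

namespace Class62

/-- Permutations with prescribed first entry. -/
lemma card_pi0 (m : ℕ) (a : Fin (m+1)) :
    (Finset.univ.filter fun π : Equiv.Perm (Fin (m+1)) => π 0 = a).card = Nat.factorial m := by
  have himg : (Finset.univ.filter fun π : Equiv.Perm (Fin (m+1)) => π 0 = a)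
      = Finset.univ.image (fun σ : Equiv.Perm (Fin m) => Equiv.Perm.decomposeFin.symm (a, σ)) := by
    ext π
    simp only [Finset.mem_filter, Finset.mem_univ, true_and, Finset.mem_image]
    constructor
    · intro h
      refine ⟨(Equiv.Perm.decomposeFin π).2, ?_⟩
      have h1 : Equiv.Perm.decomposeFin.symm (Equiv.Perm.decomposeFin π) = π :=
        Equiv.symm_apply_apply _ _
      have h2 : (Equiv.Perm.decomposeFin π).1 = a := by
        have h3 := Equiv.Perm.decomposeFin_symm_apply_zero
          (Equiv.Perm.decomposeFin π).1 (Equiv.Perm.decomposeFin π).2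
        rw [show ((Equiv.Perm.decomposeFin π).1, (Equiv.Perm.decomposeFin π).2)
            = Equiv.Perm.decomposeFin π from rfl, h1, h] at h3
        exact h3.symm
      rw [← h2, Prod.mk.eta, h1]
    · rintro ⟨σ, rfl⟩
      exact Equiv.Perm.decomposeFin_symm_apply_zero a σ
  rw [himg, Finset.card_image_of_injective _ ?_, Finset.card_univ, Fintype.card_perm,
    Fintype.card_fin]
  intro σ τ h
  have := congrArg Equiv.Perm.decomposeFin h
  simp only [Equiv.apply_symm_apply, Prod.mk.injEq] at this
  exact this.2


/-- The set of permutations with first entry `a` whose last value (by position)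
among the values in `Ioc a (last m)` is `s`. -/
def B (m : ℕ) (a s : Fin (m+1)) : Finset (Equiv.Perm (Fin (m+1))) :=
  Finset.univ.filter fun π => π 0 = a ∧
    ∀ v ∈ Finset.Ioc a (Fin.last m), v ≠ s → π.symm v < π.symm s

lemma mem_B {m : ℕ} {a s : Fin (m+1)} {π : Equiv.Perm (Fin (m+1))} :
    π ∈ B m a s ↔ π 0 = a ∧
      ∀ v ∈ Finset.Ioc a (Fin.last m), v ≠ s → π.symm v < π.symm s := by
  simp [B]

lemma swap_mem_B {m : ℕ} {a s t : Fin (m+1)} (hs : s ∈ Finset.Ioc a (Fin.last m))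
    (ht : t ∈ Finset.Ioc a (Fin.last m)) (hst : s ≠ t) {π : Equiv.Perm (Fin (m+1))}
    (hπ : π ∈ B m a s) : Equiv.swap s t * π ∈ B m a t := by
  rw [mem_B] at hπ ⊢
  obtain ⟨h0, hB⟩ := hπ
  rw [Finset.mem_Ioc] at hs ht
  have hsymm : ∀ v, (Equiv.swap s t * π).symm v = π.symm (Equiv.swap s t v) := by
    intro v
    simp [Equiv.Perm.mul_def, Equiv.symm_trans_apply]
  constructor
  · have : (Equiv.swap s t * π) 0 = Equiv.swap s t (π 0) := rfl
    rw [this, h0, Equiv.swap_apply_of_ne_of_ne (ne_of_lt hs.1) (ne_of_lt ht.1)]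
  · intro v hv hvt
    rw [hsymm, hsymm, Equiv.swap_apply_right]
    rcases eq_or_ne v s with rfl | hvs
    · rw [Equiv.swap_apply_left]
      exact hB t (Finset.mem_Ioc.2 ht) (Ne.symm hst)
    · rw [Equiv.swap_apply_of_ne_of_ne hvs hvt]
      exact hB v hv hvs

lemma card_B_eq {m : ℕ} {a s : Fin (m+1)} (hs : s ∈ Finset.Ioc a (Fin.last m)) :
    (B m a s).card = (B m a (Fin.last m)).card := by
  rcases eq_or_ne s (Fin.last m) with rfl | hsl
  · rfl
  · have hl : Fin.last m ∈ Finset.Ioc a (Fin.last m) :=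
      Finset.mem_Ioc.2 ⟨lt_of_lt_of_le (Finset.mem_Ioc.1 hs).1 (Finset.mem_Ioc.1 hs).2, le_refl _⟩
    refine Finset.card_nbij' (fun π => Equiv.swap s (Fin.last m) * π)
      (fun π => Equiv.swap s (Fin.last m) * π) ?_ ?_ ?_ ?_
    · exact fun π hπ => swap_mem_B hs hl hsl hπ
    · intro π hπ
      rw [Equiv.swap_comm]
      exact swap_mem_B hl hs (Ne.symm hsl) hπ
    · intro π _
      show Equiv.swap s (Fin.last m) * (Equiv.swap s (Fin.last m) * π) = π
      rw [← mul_assoc, Equiv.swap_mul_self, one_mul]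
    · intro π _
      show Equiv.swap s (Fin.last m) * (Equiv.swap s (Fin.last m) * π) = π
      rw [← mul_assoc, Equiv.swap_mul_self, one_mul]

lemma partition (m : ℕ) (a : Fin (m+1)) (ha : a < Fin.last m) :
    (Finset.univ.filter fun π : Equiv.Perm (Fin (m+1)) => π 0 = a)
      = (Finset.Ioc a (Fin.last m)).biUnion (fun s => B m a s) := by
  ext π
  simp only [Finset.mem_filter, Finset.mem_univ, true_and, Finset.mem_biUnion]
  constructor
  · intro h0
    have hne : ((Finset.Ioc a (Fin.last m)).image π.symm).Nonempty := by
      refine Finset.Nonempty.image ?_ _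
      exact ⟨Fin.last m, Finset.mem_Ioc.2 ⟨ha, le_refl _⟩⟩
    set M := ((Finset.Ioc a (Fin.last m)).image π.symm).max' hne with hM
    obtain ⟨s, hsmem, hsM⟩ := Finset.mem_image.1 (((Finset.Ioc a (Fin.last m)).image π.symm).max'_mem hne)
    refine ⟨s, hsmem, mem_B.2 ⟨h0, ?_⟩⟩
    intro v hv hvs
    have hle : π.symm v ≤ M := Finset.le_max' _ _ (Finset.mem_image_of_mem _ hv)
    rw [hsM]
    exact lt_of_le_of_ne hle (fun hh => hvs (π.symm.injective (hh.trans hsM.symm)))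
  · rintro ⟨s, _, hB⟩
    exact (mem_B.1 hB).1

lemma disjoint_B (m : ℕ) (a : Fin (m+1)) :
    ∀ s ∈ Finset.Ioc a (Fin.last m), ∀ t ∈ Finset.Ioc a (Fin.last m), s ≠ t →
      Disjoint (B m a s) (B m a t) := by
  intro s hs t ht hst
  rw [Finset.disjoint_left]
  intro π hπs hπt
  have h1 := (mem_B.1 hπs).2 t ht (Ne.symm hst)
  have h2 := (mem_B.1 hπt).2 s hs hst
  exact absurd h2 (not_lt.2 (le_of_lt h1))

/-- Key counting: `(m - a) * |B m a (last m)| = m!`. -/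
lemma key (m : ℕ) (a : Fin (m+1)) (ha : a < Fin.last m) :
    (m - a.val) * (B m a (Fin.last m)).card = Nat.factorial m := by
  have h1 := card_pi0 m a
  rw [partition m a ha, Finset.card_biUnion (disjoint_B m a)] at h1
  rw [Finset.sum_congr rfl (fun s hs => card_B_eq hs), Finset.sum_const, smul_eq_mul,
    Fin.card_Ioc] at h1
  simpa using h1

lemma harm (m : ℕ) :
    ∑ i : Fin m, (1:ℚ)/((m - i.val : ℕ) : ℚ) = ∑ k ∈ Finset.Icc 1 m, (1:ℚ)/(k:ℚ) := by
  rw [Fin.sum_univ_eq_sum_range (fun j => (1:ℚ)/((m - j : ℕ) : ℚ)) m]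
  rw [show (Finset.Icc 1 m) = Finset.Ico 1 (m + 1) from by rw [Finset.Ico_add_one_right_eq_Icc],
    Finset.sum_Ico_eq_sum_range]
  simp only [Nat.add_sub_cancel]
  rw [← Finset.sum_range_reflect (fun j => (1:ℚ)/(((1 + j : ℕ)):ℚ)) m]
  refine Finset.sum_congr rfl ?_
  intro j hj
  rw [Finset.mem_range] at hj
  congr 2
  omega

lemma fiber_last (m : ℕ) :
    ((Finset.univ.filter fun π : Equiv.Perm (Fin (m+1)) =>
        π 0 = Fin.last m ∨ ∃ v, π 0 < v ∧ v < Fin.last m ∧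
          π.symm (Fin.last m) < π.symm v).filter fun π => π 0 = Fin.last m).card
      = Nat.factorial m := by
  rw [Finset.filter_filter]
  rw [show (Finset.univ.filter fun π : Equiv.Perm (Fin (m+1)) =>
      (π 0 = Fin.last m ∨ ∃ v, π 0 < v ∧ v < Fin.last m ∧
        π.symm (Fin.last m) < π.symm v) ∧ π 0 = Fin.last m)
    = Finset.univ.filter fun π : Equiv.Perm (Fin (m+1)) => π 0 = Fin.last m from by
      ext π; simp only [Finset.mem_filter, Finset.mem_univ, true_and]; tauto]
  exact card_pi0 m (Fin.last m)

lemma fiber_lt (m : ℕ) (i : Fin m) :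
    ((Finset.univ.filter fun π : Equiv.Perm (Fin (m+1)) =>
        π 0 = Fin.last m ∨ ∃ v, π 0 < v ∧ v < Fin.last m ∧
          π.symm (Fin.last m) < π.symm v).filter fun π => π 0 = i.castSucc).card
      + (B m i.castSucc (Fin.last m)).card = Nat.factorial m := by
  set a := i.castSucc with hadef
  have ha : a < Fin.last m := Fin.castSucc_lt_last i
  rw [Finset.filter_filter]
  have hset : (Finset.univ.filter fun π : Equiv.Perm (Fin (m+1)) =>
      (π 0 = Fin.last m ∨ ∃ v, π 0 < v ∧ v < Fin.last m ∧
        π.symm (Fin.last m) < π.symm v) ∧ π 0 = a)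
    = (Finset.univ.filter fun π : Equiv.Perm (Fin (m+1)) => π 0 = a) \ B m a (Fin.last m) := by
    ext π
    simp only [Finset.mem_filter, Finset.mem_univ, true_and, Finset.mem_sdiff, mem_B,
      Finset.mem_Ioc]
    constructor
    · rintro ⟨hP, h0⟩
      refine ⟨h0, ?_⟩
      rintro ⟨-, hall⟩
      rcases hP with hP | ⟨v, hv1, hv2, hv3⟩
      · exact absurd (h0.symm.trans hP) (ne_of_lt ha)
      · rw [h0] at hv1
        exact absurd (hall v ⟨hv1, le_of_lt hv2⟩ (ne_of_lt hv2)) (not_lt.2 (le_of_lt hv3))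
    · rintro ⟨h0, hnB⟩
      refine ⟨?_, h0⟩
      right
      by_contra hcon
      push_neg at hcon
      refine hnB ⟨h0, ?_⟩
      intro v hv hvl
      have hav : a < v := hv.1
      have hvlt : v < Fin.last m := lt_of_le_of_ne hv.2 hvl
      have := hcon v (by rw [h0]; exact hav) hvlt
      have hne : π.symm v ≠ π.symm (Fin.last m) := fun hh => hvl (π.symm.injective hh)
      exact lt_of_le_of_ne this hne
  rw [hset]
  have hsub : B m a (Fin.last m) ⊆ Finset.univ.filter fun π : Equiv.Perm (Fin (m+1)) => π 0 = a := by
    intro π hπ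
    simp only [Finset.mem_filter, Finset.mem_univ, true_and]
    exact (mem_B.1 hπ).1
  rw [Finset.card_sdiff_add_card_eq_card hsub]
  exact card_pi0 m a

theorem main (m : ℕ) (h0 : (0:ℕ) < m+1) (hm : m < m+1) :
    ((Finset.univ.filter fun π : Equiv.Perm (Fin (m+1)) =>
        π ⟨0,h0⟩ = ⟨m,hm⟩ ∨ ∃ v : Fin (m+1), π ⟨0,h0⟩ < v ∧ v < ⟨m,hm⟩ ∧
          π.symm ⟨m,hm⟩ < π.symm v).card : ℚ)
      = (Nat.factorial m : ℚ) * ((((m+1:ℕ)):ℚ) - ∑ k ∈ Finset.Icc 1 m, (1:ℚ)/(k:ℚ)) := by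
  have e0 : (⟨0, h0⟩ : Fin (m+1)) = 0 := by ext; simp
  have el : (⟨m, hm⟩ : Fin (m+1)) = Fin.last m := rfl
  simp only [e0, el]
  set F := Finset.univ.filter fun π : Equiv.Perm (Fin (m+1)) =>
      π 0 = Fin.last m ∨ ∃ v : Fin (m+1), π 0 < v ∧ v < Fin.last m ∧
        π.symm (Fin.last m) < π.symm v with hF
  have hfib : F.card = ∑ a : Fin (m+1), (F.filter fun π => π 0 = a).card :=
    Finset.card_eq_sum_card_fiberwise (fun π _ => Finset.mem_univ (π 0))
  rw [Fin.sum_univ_castSucc] at hfib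
  -- cast to ℚ
  have hcast : (F.card : ℚ) = (∑ i : Fin m, ((F.filter fun π => π 0 = i.castSucc).card : ℚ))
      + ((F.filter fun π => π 0 = Fin.last m).card : ℚ) := by
    rw [hfib]; push_cast; ring
  rw [hcast, fiber_last m]
  have hterm : ∀ i : Fin m, ((F.filter fun π => π 0 = i.castSucc).card : ℚ)
      = (Nat.factorial m : ℚ) - (Nat.factorial m : ℚ) / ((m - i.val : ℕ) : ℚ) := by
    intro i
    have h1 := fiber_lt m i
    have h2 := key m i.castSucc (Fin.castSucc_lt_last i)
    have hpos : (0:ℕ) < m - i.val := by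
      have := i.isLt; omega
    have h2' : (m - i.val) * (B m i.castSucc (Fin.last m)).card = Nat.factorial m := by
      simpa using h2
    have hne : ((m - i.val : ℕ) : ℚ) ≠ 0 := Nat.cast_ne_zero.2 (by omega)
    have hQ : (((m - i.val : ℕ)) : ℚ) * ((B m i.castSucc (Fin.last m)).card : ℚ)
        = (Nat.factorial m : ℚ) := by exact_mod_cast congrArg (Nat.cast : ℕ → ℚ) h2'
    have hc : ((B m i.castSucc (Fin.last m)).card : ℚ)
        = (Nat.factorial m : ℚ) / ((m - i.val : ℕ) : ℚ) := by
      rw [eq_div_iff hne, mul_comm]; exact hQ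
    have : ((F.filter fun π => π 0 = i.castSucc).card : ℚ)
        + ((B m i.castSucc (Fin.last m)).card : ℚ) = (Nat.factorial m : ℚ) := by
      exact_mod_cast congrArg (Nat.cast : ℕ → ℚ) h1
    rw [hc] at this
    linarith
  rw [Finset.sum_congr rfl (fun i _ => hterm i)]
  rw [Finset.sum_sub_distrib, Finset.sum_const, Finset.card_univ, Fintype.card_fin]
  have hsum : ∑ i : Fin m, (Nat.factorial m : ℚ) / ((m - i.val : ℕ) : ℚ)
      = (Nat.factorial m : ℚ) * ∑ k ∈ Finset.Icc 1 m, (1:ℚ)/(k:ℚ) := by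
    rw [← harm m, Finset.mul_sum]
    refine Finset.sum_congr rfl (fun i _ => ?_)
    rw [mul_one_div]
  rw [hsum]
  push_cast
  ring

end Class62

/-- For `n ≥ 1`, the number of permutations `π` of `{1,…,n}` such that either
the first entry is `n`, or there exists a value `v` with `π₁ < v < n` appearing
at a position after the position of `n`, equals `(n-1)!·(n - H_{n-1})`. Here
`π i` is the entry in position `i`, and `π.symm v` is the position of value `v`. -/
theorem class62_containment_count (n : ℕ) (hn : 1 ≤ n) :
    ((Finset.univ.filter fun π : Equiv.Perm (Fin n) =>
        π ⟨0, by omega⟩ = ⟨n - 1, by omega⟩ ∨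
          ∃ v : Fin n, π ⟨0, by omega⟩ < v ∧ v < ⟨n - 1, by omega⟩ ∧
            π.symm ⟨n - 1, by omega⟩ < π.symm v).card : ℚ) =
      ((n - 1).factorial : ℚ) * ((n : ℚ) - ∑ k ∈ Finset.Icc 1 (n - 1), (1 : ℚ) / (k : ℚ)) := by
  obtain ⟨m, rfl⟩ : ∃ m, n = m + 1 := ⟨n - 1, by omega⟩
  exact Class62.main m (by omega) (by omega)
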